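/- Let 0 ≤ l ≤ m ≤ n and identify an l-plane L ∈ A_loc(l,n) with the (l+1)-tuple (x_0,…,x_l), x_j = L ∩ Π_j, and an m-plane V ∈ A_loc(m,n) with the (l+1)-tuple (v_0,…,v_l) of parallel (m−l)-planes v_j = V ∩ Π_j. Then L ⊆ V if and only if x_j ∈ v_j for every j = 0,…,l. -/

import Mathlib

open Module

/-- The parallel affine planes `Π_j = Π_0 + e_{n-l+j}`, where `Π_0 = ℝ^{n-l} × {0}^l`. -/
def PiPlane (n l : ℕ) (j : Fin (l + 1)) : Set (Fin n → ℝ) :=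
  {x | ∀ i : Fin n, n - l ≤ (i : ℕ) →
    x i = if (i : ℕ) + 1 = n - l + (j : ℕ) then 1 else 0}

theorem stmt_14 (n l m : ℕ) (hlm : l ≤ m) (hmn : m ≤ n) (hln : l < n)
    (L V : AffineSubspace ℝ (Fin n → ℝ))
    (hLdim : finrank ℝ L.direction = l)
    (hVdim : finrank ℝ V.direction = m)
    (x : Fin (l + 1) → Fin n → ℝ)
    (hxL : ∀ j, x j ∈ L) (hxP : ∀ j, x j ∈ PiPlane n l j)
    (v : Fin (l + 1) → Set (Fin n → ℝ))
    (hv : ∀ j, v j = (V : Set (Fin n → ℝ)) ∩ PiPlane n l j) :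
    (L : Set (Fin n → ℝ)) ⊆ (V : Set (Fin n → ℝ)) ↔ ∀ j, x j ∈ v j := by
  constructor
  · intro hLV j
    rw [hv]
    exact ⟨hLV (hxL j), hxP j⟩
  · intro hxv
    have hxV : ∀ j, x j ∈ V := fun j => by
      have h := hxv j; rw [hv] at h; exact h.1
    -- key coordinate computation
    have hcoord : ∀ (j j' : Fin (l + 1)) (hj : (j : ℕ) ≠ 0)
        (i : Fin n) (hi : (i : ℕ) = n - l + (j : ℕ) - 1),
        x j' i = if (j' : ℕ) = (j : ℕ) then 1 else 0 := by
      intro j j' hj i hi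
      have hj1 : 1 ≤ (j : ℕ) := Nat.one_le_iff_ne_zero.2 hj
      have hige : n - l ≤ (i : ℕ) := by omega
      have hi1 : (i : ℕ) + 1 = n - l + (j : ℕ) := by omega
      rw [hxP j' i hige, hi1]
      by_cases h : (j' : ℕ) = (j : ℕ)
      · simp [h]
      · have : n - l + (j : ℕ) ≠ n - l + (j' : ℕ) := by omega
        rw [if_neg this, if_neg h]
    -- affine independence of the x j
    have hind : AffineIndependent ℝ x := by
      rw [affineIndependent_iff_linearIndependent_vsub ℝ x 0,
        Fintype.linearIndependent_iff]
      intro c hc j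
      have hj1 : 1 ≤ ((j : Fin (l + 1)) : ℕ) := by
        have := j.2
        simp only [ne_eq, Fin.ext_iff, Fin.val_zero] at this
        omega
      have hjl : ((j : Fin (l + 1)) : ℕ) ≤ l := Nat.lt_succ_iff.1 (j : Fin (l + 1)).2
      have hilt : n - l + ((j : Fin (l + 1)) : ℕ) - 1 < n := by omega
      set i : Fin n := ⟨n - l + ((j : Fin (l + 1)) : ℕ) - 1, hilt⟩ with hidef
      have h0 := congrFun hc i
      rw [Finset.sum_apply] at h0
      simp only [Pi.smul_apply, Pi.zero_apply] at h0
      have hval : ∀ j' : {y : Fin (l + 1) // y ≠ 0},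
          ((x (j' : Fin (l + 1)) -ᵥ x 0) i : ℝ) = if j' = j then 1 else 0 := by
        intro j'
        have hx0 : x 0 i = 0 := by
          rw [hcoord j 0 (by omega) i rfl]
          simp only [Fin.val_zero]
          split_ifs with hc0
          · omega
          · exact if_neg hc0
        have hxj' : x (j' : Fin (l + 1)) i =
            if ((j' : Fin (l + 1)) : ℕ) = ((j : Fin (l + 1)) : ℕ) then 1 else 0 :=
          hcoord j (j' : Fin (l + 1)) (by omega) i rfl
        have : ((j' : Fin (l + 1)) : ℕ) = ((j : Fin (l + 1)) : ℕ) ↔ j' = j := by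
          rw [Subtype.ext_iff, Fin.ext_iff]
        simp only [vsub_eq_sub, Pi.sub_apply, hx0, hxj', sub_zero, this]
      calc c j = ∑ j', c j' * ((x (j' : Fin (l + 1)) -ᵥ x 0) i) := by
            rw [Finset.sum_congr rfl fun j' _ => by rw [hval j']]
            simp
        _ = 0 := by
            rw [← h0]
            exact Finset.sum_congr rfl fun j' _ => by simp [smul_eq_mul]
    have hspan : affineSpan ℝ (Set.range x) ≤ L :=
      affineSpan_le.2 (Set.range_subset_iff.2 hxL)
    have hdir : (affineSpan ℝ (Set.range x)).direction = L.direction := by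
      apply Submodule.eq_of_le_of_finrank_eq (AffineSubspace.direction_le hspan)
      rw [hLdim, direction_affineSpan]
      exact hind.finrank_vectorSpan (by simp)
    have hLeq : affineSpan ℝ (Set.range x) = L := by
      apply AffineSubspace.ext_of_direction_eq hdir
      exact ⟨x 0, mem_affineSpan ℝ ⟨0, rfl⟩, hxL 0⟩
    rw [← hLeq]
    exact affineSpan_le.2 (Set.range_subset_iff.2 hxV)
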